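/- Let S be a complex number and let a, b, q : ℕ → ℂ be sequences with a₀ = S, b₀ = 0, b₁ = 1, satisfying the recurrences a_{k+2} = a_k − q_{k+1}·a_{k+1} and b_{k+2} = b_k − q_{k+1}·b_{k+1} for all k ≥ 0, and suppose |a_{k+1}| ≤ (√15/4)·|a_k| for all k ≥ 0. Then for every k ≥ 0: (i) a_k·b_{k+1} − a_{k+1}·b_k = (−1)^k·S, and (ii) |a_k·b_{k+1}| ≤ 16·(1 − (15/16)^{k+1})·|S|; in particular |a_k·b_{k+1}| ≤ 16·|S|. -/

import Mathlib

/-- For sequences in ℂ built from S with b₀ = 0, b₁ = 1 and the Euclidean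
recurrences, with |a_{k+1}| ≤ (√15/4)·|a_k|, one has
a_k·b_{k+1} − a_{k+1}·b_k = (−1)^k·S and
|a_k·b_{k+1}| ≤ 16·(1 − (15/16)^{k+1})·|S| ≤ 16·|S|. -/
theorem complex_ab_lemma (S : ℂ) (a b q : ℕ → ℂ)
    (ha0 : a 0 = S) (hb0 : b 0 = 0) (hb1 : b 1 = 1)
    (ha : ∀ k, a (k + 2) = a k - q (k + 1) * a (k + 1))
    (hb : ∀ k, b (k + 2) = b k - q (k + 1) * b (k + 1))
    (hdec : ∀ k, ‖a (k + 1)‖ ≤ Real.sqrt 15 / 4 * ‖a k‖) :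
    ∀ k, a k * b (k + 1) - a (k + 1) * b k = (-1) ^ k * S ∧
      ‖a k * b (k + 1)‖ ≤
        16 * (1 - (15 / 16 : ℝ) ^ (k + 1)) * ‖S‖ ∧
      ‖a k * b (k + 1)‖ ≤ 16 * ‖S‖ := by
  have hsq : Real.sqrt 15 * Real.sqrt 15 = 15 := Real.mul_self_sqrt (by norm_num)
  have hsnn : (0:ℝ) ≤ Real.sqrt 15 := Real.sqrt_nonneg 15
  have key : ∀ k, (a k * b (k + 1) - a (k + 1) * b k = (-1) ^ k * S) ∧
      ‖a k * b (k + 1)‖ ≤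
        16 * (1 - (15 / 16 : ℝ) ^ (k + 1)) * ‖S‖ := by
    intro k
    induction k with
    | zero =>
      constructor
      · simp [ha0, hb0, hb1]
      · simp [ha0, hb1]
        norm_num
    | succ n ih =>
      obtain ⟨ih1, ih2⟩ := ih
      have p1 : a (n + 1) * b (n + 1 + 1) - a (n + 1 + 1) * b (n + 1) =
          (-1) ^ (n + 1) * S := by
        rw [ha n, hb n]
        linear_combination -ih1
      refine ⟨p1, ?_⟩
      have h1 : a (n + 1) * b (n + 2) = a (n + 2) * b (n + 1) + (-1) ^ (n + 1) * S := by
        linear_combination p1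
      have h2 : ‖a (n + 1) * b (n + 2)‖ ≤
          ‖a (n + 2) * b (n + 1)‖ + ‖S‖ := by
        rw [h1]
        refine le_trans (norm_add_le _ _) ?_
        gcongr
        simp [map_mul, map_pow]
      have h3 : ‖a (n + 2)‖ ≤ (15 / 16) * ‖a n‖ := by
        have d1 := hdec (n + 1)
        have d2 := hdec n
        have habs : (0:ℝ) ≤ ‖a n‖ := norm_nonneg _
        nlinarith [norm_nonneg (a (n + 1))]
      have h4 : ‖a (n + 2) * b (n + 1)‖ ≤
          (15 / 16) * ‖a n * b (n + 1)‖ := by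
        rw [norm_mul, norm_mul]
        have := norm_nonneg (b (n + 1))
        nlinarith
      have hpow : ((15 / 16 : ℝ)) ^ (n + 1 + 1) = 15 / 16 * (15 / 16 : ℝ) ^ (n + 1) := by
        ring
      have hS : (0:ℝ) ≤ ‖S‖ := norm_nonneg _
      calc ‖a (n + 1) * b (n + 1 + 1)‖
          ≤ ‖a (n + 2) * b (n + 1)‖ + ‖S‖ := h2
        _ ≤ (15 / 16) * ‖a n * b (n + 1)‖ + ‖S‖ := by linarith
        _ ≤ (15 / 16) * (16 * (1 - (15 / 16 : ℝ) ^ (n + 1)) * ‖S‖)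
            + ‖S‖ := by linarith
        _ = 16 * (1 - (15 / 16 : ℝ) ^ (n + 1 + 1)) * ‖S‖ := by
            rw [hpow]; ring
  intro k
  obtain ⟨h1, h2⟩ := key k
  refine ⟨h1, h2, le_trans h2 ?_⟩
  have hS : (0:ℝ) ≤ ‖S‖ := norm_nonneg _
  have : (0:ℝ) ≤ (15 / 16 : ℝ) ^ (k + 1) := by positivity
  nlinarith
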